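/- For any three generalized triangle factors H_1, H_2, H_3 on the same set of 7 vertices, the union of their edge sets contains at most 17 edges; in particular, it is impossible to cover 18 of the edges of the complete graph K_7 with three generalized triangle factors. -/

import Mathlib

open SimpleGraph

/-- A generalized triangle factor: every connected component is a subgraph of a
triangle (a triangle, a path with two edges, a single edge, or an isolated
vertex); equivalently, every connected component has at most `3` vertices. -/
def IsGenTriangleFactor {V : Type*} (H : SimpleGraph V) : Prop :=
  ∀ C : H.ConnectedComponent, C.supp.ncard ≤ 3

/-- `G` is the union of the `r` graphs `H 0, …, H (r-1)` on the same vertex set: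
its edge set is the union of their edge sets. -/
def IsUnionOf {V : Type*} (G : SimpleGraph V) {r : ℕ} (H : Fin r → SimpleGraph V) : Prop :=
  G = ⨆ i, H i

open Finset

section helpers
variable {H : SimpleGraph (Fin 7)} (hgf : IsGenTriangleFactor H)

/-- full vertex: has two distinct neighbors -/
def Full (H : SimpleGraph (Fin 7)) (v : Fin 7) : Prop := ∃ a b, a ≠ b ∧ H.Adj v a ∧ H.Adj v b

lemma mem_supp_of_adj {v w : Fin 7} (h : H.Adj v w) : w ∈ (H.connectedComponentMk v).supp := by
  rw [ConnectedComponent.mem_supp_iff, ConnectedComponent.eq]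
  exact h.symm.reachable

include hgf in
lemma supp3 {v a b : Fin 7} (ha : H.Adj v a) (hb : H.Adj v b) (hab : a ≠ b) :
    (H.connectedComponentMk v).supp = {v, a, b} := by
  refine (Set.eq_of_subset_of_ncard_le ?_ ?_ (Set.toFinite _)).symm
  · rintro x (rfl | rfl | rfl)
    · rfl
    · exact mem_supp_of_adj ha
    · exact mem_supp_of_adj hb
  · have h3 : ({v, a, b} : Set (Fin 7)).ncard = 3 := by
      rw [Set.ncard_insert_of_notMem (by simp [ha.ne, hb.ne]) (Set.toFinite _),
        Set.ncard_pair hab]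
    rw [h3]; exact hgf _

include hgf in
/-- neighbors stay within the triple -/
lemma closed3 {v a b : Fin 7} (ha : H.Adj v a) (hb : H.Adj v b) (hab : a ≠ b) :
    ∀ x w, x ∈ ({v, a, b} : Set (Fin 7)) → H.Adj x w → w ∈ ({v, a, b} : Set (Fin 7)) := by
  intro x w hx hadj
  have hsupp := supp3 hgf ha hb hab
  have hcomp : H.connectedComponentMk x = H.connectedComponentMk v := by
    rcases hx with rfl | rfl | rfl
    · rfl
    · rw [ConnectedComponent.eq]; exact ha.symm.reachable
    · rw [ConnectedComponent.eq]; exact hb.symm.reachable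
  have : w ∈ (H.connectedComponentMk x).supp := mem_supp_of_adj hadj
  rwa [hcomp, hsupp] at this

include hgf in
lemma tri_of_full_full {v a b : Fin 7} (ha : H.Adj v a) (hb : H.Adj v b) (hab : a ≠ b)
    (hfa : Full H a) : H.Adj a b := by
  obtain ⟨x, y, hxy, hax, hay⟩ := hfa
  have hx := closed3 hgf ha hb hab a x (by simp) hax
  have hy := closed3 hgf ha hb hab a y (by simp) hay
  rcases hx with rfl | rfl | rfl
  · rcases hy with rfl | rfl | rfl
    · exact absurd rfl hxy
    · exact absurd rfl hay.ne
    · exact hay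
  · exact absurd rfl hax.ne
  · exact hax

variable [DecidableRel H.Adj]

include hgf in
lemma nbr_eq {v a b : Fin 7} (ha : H.Adj v a) (hb : H.Adj v b) (hab : a ≠ b) :
    H.neighborFinset v = {a, b} := by
  apply Finset.Subset.antisymm
  · intro w hw
    rw [mem_neighborFinset] at hw
    have := closed3 hgf ha hb hab v w (by simp) hw
    rcases this with rfl | rfl | rfl
    · exact absurd rfl hw.ne
    · simp
    · simp
  · intro w hw
    rw [mem_neighborFinset]
    rcases Finset.mem_insert.mp hw with rfl | hw
    · exact ha
    · rw [Finset.mem_singleton] at hw; subst hw; exact hb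

include hgf in
lemma deg_full {v : Fin 7} (hf : Full H v) : H.degree v = 2 := by
  obtain ⟨a, b, hab, ha, hb⟩ := hf
  rw [degree, nbr_eq hgf ha hb hab, Finset.card_insert_of_notMem (by simpa using hab),
    Finset.card_singleton]

lemma deg_nonfull {v : Fin 7} (hf : ¬ Full H v) : H.degree v ≤ 1 := by
  rw [degree]
  refine Finset.card_le_one.mpr ?_
  intro a ha b hb
  rw [mem_neighborFinset] at ha hb
  by_contra hne
  exact hf ⟨a, b, hne, ha, hb⟩

include hgf in
lemma deg_le_two (v : Fin 7) : H.degree v ≤ 2 := by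
  by_cases hf : Full H v
  · exact (deg_full hgf hf).le
  · exact (deg_nonfull hf).trans one_le_two

end helpers
section counting
variable {H : SimpleGraph (Fin 7)} (hgf : IsGenTriangleFactor H) [DecidableRel H.Adj]

open Classical in
include hgf in
lemma fulls_card (h6 : 6 ≤ H.edgeSet.ncard) :
    5 ≤ (Finset.univ.filter (Full H)).card := by
  have hhs : ∑ v, H.degree v = 2 * H.edgeFinset.card := H.sum_degrees_eq_twice_card_edges
  have hcard : H.edgeSet.ncard = H.edgeFinset.card := by
    rw [Set.ncard_eq_toFinset_card']; exact congrArg _ (by ext; simp)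
  have h12 : 12 ≤ ∑ v, H.degree v := by omega
  have hsplit := Finset.sum_filter_add_sum_filter_not Finset.univ (Full H) (fun v => H.degree v)
  set P := Finset.univ.filter (Full H) with hP
  set N := Finset.univ.filter (fun v => ¬ Full H v) with hN
  have hPsum : ∑ v ∈ P, H.degree v ≤ 2 * P.card := by
    calc ∑ v ∈ P, H.degree v ≤ ∑ _v ∈ P, 2 :=
        Finset.sum_le_sum (fun v _ => deg_le_two hgf v)
      _ = 2 * P.card := by rw [Finset.sum_const]; ring
  have hNsum : ∑ v ∈ N, H.degree v ≤ N.card := by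
    calc ∑ v ∈ N, H.degree v ≤ ∑ _v ∈ N, 1 :=
        Finset.sum_le_sum (fun v hv => deg_nonfull (by simpa [hN] using hv))
      _ = N.card := by rw [Finset.sum_const]; ring
  have hPN : P.card + N.card = 7 := by
    rw [hP, hN]
    simpa using Finset.card_filter_add_card_filter_not (s := Finset.univ)
      (p := Full H)
  omega

open Classical in
include hgf in
lemma exists_triangle (h6 : 6 ≤ H.edgeSet.ncard) :
    ∃ p q r : Fin 7, H.Adj p q ∧ H.Adj p r ∧ H.Adj q r := by
  have h5 := fulls_card hgf h6
  set P := Finset.univ.filter (Full H) with hP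
  have hne : P.Nonempty := Finset.card_pos.mp (by omega)
  obtain ⟨v, hv⟩ := hne
  have hvf : Full H v := by simpa [hP] using hv
  obtain ⟨a, b, hab, ha, hb⟩ := hvf
  by_cases hfa : Full H a
  · exact ⟨v, a, b, ha, hb, tri_of_full_full hgf ha hb hab hfa⟩
  by_cases hfb : Full H b
  · refine ⟨v, b, a, hb, ha, tri_of_full_full hgf hb ha (Ne.symm hab) hfb⟩
  -- both neighbors nonfull; all four others are full
  have hsub : P ⊆ Finset.univ \ {a, b} := by
    intro x hx
    simp only [hP, Finset.mem_filter] at hx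
    simp only [Finset.mem_sdiff, Finset.mem_univ, true_and, Finset.mem_insert,
      Finset.mem_singleton]
    rintro (rfl | rfl)
    · exact hfa hx.2
    · exact hfb hx.2
  have hcc : (Finset.univ \ {a, b} : Finset (Fin 7)).card = 5 := by
    rw [Finset.card_sdiff_of_subset (by simp)]
    simp [Finset.card_insert_of_notMem, hab]
  have hPeq : P = Finset.univ \ {a, b} := Finset.eq_of_subset_of_card_le hsub (by omega)
  -- pick w outside {v,a,b}
  have hw4 : (Finset.univ \ {v, a, b} : Finset (Fin 7)).Nonempty := by
    rw [← Finset.card_pos, Finset.card_sdiff_of_subset (by simp)]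
    have : ({v, a, b} : Finset (Fin 7)).card ≤ 3 :=
      (Finset.card_insert_le _ _).trans (by have := Finset.card_insert_le a {b}; rw [Finset.card_singleton] at this; omega)
    simp only [Finset.card_univ, Fintype.card_fin]
    omega
  obtain ⟨w, hw⟩ := hw4
  simp only [Finset.mem_sdiff, Finset.mem_univ, true_and, Finset.mem_insert,
    Finset.mem_singleton, not_or] at hw
  obtain ⟨hwv, hwa, hwb⟩ := hw
  have hwP : w ∈ P := by
    rw [hPeq]; simp [hwa, hwb]
  have hwf : Full H w := by simpa [hP] using hwP
  obtain ⟨x, y, hxy, hx, hy⟩ := hwf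
  have hxfull : Full H x := by
    have hxP : x ∈ P := by
      rw [hPeq]
      simp only [Finset.mem_sdiff, Finset.mem_univ, true_and, Finset.mem_insert,
        Finset.mem_singleton, not_or]
      constructor
      · rintro rfl
        -- x = a : Adj w x, but x's neighbors are all v
        have hz : ∀ z, H.Adj x z → z = v := by
          intro z hz
          by_contra hzv
          exact hfa ⟨z, v, hzv, hz, ha.symm⟩
        exact hwv (hz w hx.symm)
      · rintro rfl
        have hz : ∀ z, H.Adj x z → z = v := by
          intro z hz
          by_contra hzv
          exact hfb ⟨z, v, hzv, hz, hb.symm⟩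
        exact hwv (hz w hx.symm)
    simpa [hP] using hxP
  exact ⟨w, x, y, hx, hy, tri_of_full_full hgf hx hy hxy hxfull⟩

end counting
section structure6
variable {H : SimpleGraph (Fin 7)} (hgf : IsGenTriangleFactor H) [DecidableRel H.Adj]

lemma full_of_two_le_deg {H : SimpleGraph (Fin 7)} [DecidableRel H.Adj]
    {v : Fin 7} (h : 2 ≤ H.degree v) : Full H v := by
  have h' : 1 < (H.neighborFinset v).card := by
    unfold SimpleGraph.degree at h; omega
  obtain ⟨a, ha, b, hb, hab⟩ := Finset.one_lt_card.mp h'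
  exact ⟨a, b, hab, (mem_neighborFinset _ _ _).mp ha, (mem_neighborFinset _ _ _).mp hb⟩

include hgf in
set_option maxHeartbeats 1000000 in
lemma structure_raw (h6 : 6 ≤ H.edgeSet.ncard) :
    ∃ p q r u x y : Fin 7,
      (p ≠ q ∧ p ≠ r ∧ p ≠ u ∧ p ≠ x ∧ p ≠ y ∧ q ≠ r ∧ q ≠ u ∧ q ≠ x ∧ q ≠ y ∧
       r ≠ u ∧ r ≠ x ∧ r ≠ y ∧ u ≠ x ∧ u ≠ y ∧ x ≠ y) ∧
      H.Adj p q ∧ H.Adj p r ∧ H.Adj q r ∧ H.Adj u x ∧ H.Adj u y ∧ H.Adj x y ∧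
      H.edgeSet = {s(p,q), s(p,r), s(q,r), s(u,x), s(u,y), s(x,y)} ∧
      H.edgeSet.ncard = 6 := by
  classical
  obtain ⟨p, q, r, hpq, hpr, hqr⟩ := exists_triangle hgf h6
  have hclosed := closed3 hgf hpq hpr hqr.ne
  have hdp : H.degree p = 2 := deg_full hgf ⟨q, r, hqr.ne, hpq, hpr⟩
  have hdq : H.degree q = 2 := deg_full hgf ⟨p, r, hpr.ne, hpq.symm, hqr⟩
  have hdr : H.degree r = 2 := deg_full hgf ⟨p, q, hpq.ne, hpr.symm, hqr.symm⟩
  have hhs : ∑ v, H.degree v = 2 * H.edgeFinset.card := H.sum_degrees_eq_twice_card_edges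
  have hcard : H.edgeSet.ncard = H.edgeFinset.card := by rw [Set.ncard_eq_toFinset_card']; exact congrArg _ (by ext; simp)
  have hc3 : ({p, q, r} : Finset (Fin 7)).card = 3 := by
    rw [Finset.card_insert_of_notMem (by simp [hpq.ne, hpr.ne]),
      Finset.card_insert_of_notMem (by simp [hqr.ne]), Finset.card_singleton]
  have hsum3 : ∑ v ∈ ({p, q, r} : Finset (Fin 7)), H.degree v = 6 := by
    rw [Finset.sum_insert (by simp [hpq.ne, hpr.ne]),
      Finset.sum_insert (by simp [hqr.ne]), Finset.sum_singleton, hdp, hdq, hdr]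
    norm_num
  have hsplit : ∑ v ∈ (Finset.univ \ {p, q, r}), H.degree v
      + ∑ v ∈ ({p, q, r} : Finset (Fin 7)), H.degree v = ∑ v, H.degree v :=
    Finset.sum_sdiff (Finset.subset_univ _)
  have hRcard : (Finset.univ \ ({p, q, r} : Finset (Fin 7))).card = 4 := by
    rw [Finset.card_sdiff_of_subset (Finset.subset_univ _), hc3]; rfl
  have hRsum : 6 ≤ ∑ v ∈ (Finset.univ \ {p, q, r}), H.degree v := by omega
  have hex : ∃ u ∈ Finset.univ \ ({p, q, r} : Finset (Fin 7)), 2 ≤ H.degree u := by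
    by_contra hcon
    push_neg at hcon
    have hb4 : ∑ v ∈ (Finset.univ \ ({p, q, r} : Finset (Fin 7))), H.degree v
        ≤ (Finset.univ \ ({p, q, r} : Finset (Fin 7))).card • 1 :=
      Finset.sum_le_card_nsmul _ _ 1 (fun v hv => by have := hcon v hv; omega)
    rw [hRcard] at hb4
    simp at hb4
    omega
  obtain ⟨u, huR, hdu⟩ := hex
  have hu3 : u ∉ ({p, q, r} : Set (Fin 7)) := by
    have := (Finset.mem_sdiff.mp huR).2
    simpa using this
  obtain ⟨x, y, hxy, hux, huy⟩ := full_of_two_le_deg hdu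
  have hx3 : x ∉ ({p, q, r} : Set (Fin 7)) := fun hx => hu3 (hclosed x u hx hux.symm)
  have hy3 : y ∉ ({p, q, r} : Set (Fin 7)) := fun hy => hu3 (hclosed y u hy huy.symm)
  have hclosed2 := closed3 hgf hux huy hxy
  simp only [Set.mem_insert_iff, Set.mem_singleton_iff, not_or] at hu3 hx3 hy3
  obtain ⟨hup, huq, hur⟩ := hu3
  obtain ⟨hxp, hxq, hxr⟩ := hx3
  obtain ⟨hyp, hyq, hyr⟩ := hy3
  -- the seventh vertex
  have hc6 : ({p, q, r, u, x, y} : Finset (Fin 7)).card = 6 := by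
    rw [Finset.card_insert_of_notMem (by simp [hpq.ne, hpr.ne, Ne.symm hup, Ne.symm hxp, Ne.symm hyp]),
      Finset.card_insert_of_notMem (by simp [hqr.ne, Ne.symm huq, Ne.symm hxq, Ne.symm hyq]),
      Finset.card_insert_of_notMem (by simp [Ne.symm hur, Ne.symm hxr, Ne.symm hyr]),
      Finset.card_insert_of_notMem (by simp [hux.ne, huy.ne]),
      Finset.card_insert_of_notMem (by simp [hxy]), Finset.card_singleton]
  have ht0 : ∃ t0, Finset.univ \ ({p, q, r, u, x, y} : Finset (Fin 7)) = {t0} := by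
    apply Finset.card_eq_one.mp
    rw [Finset.card_sdiff_of_subset (Finset.subset_univ _), hc6]; rfl
  obtain ⟨t0, ht0⟩ := ht0
  have ht0m : t0 ∉ ({p, q, r, u, x, y} : Finset (Fin 7)) := by
    have : t0 ∈ Finset.univ \ ({p, q, r, u, x, y} : Finset (Fin 7)) := by
      rw [ht0]; exact Finset.mem_singleton_self t0
    exact (Finset.mem_sdiff.mp this).2
  simp only [Finset.mem_insert, Finset.mem_singleton, not_or] at ht0m
  obtain ⟨htp, htq, htr, htu, htx, hty⟩ := ht0m
  have huniv : ∀ w : Fin 7, w = p ∨ w = q ∨ w = r ∨ w = u ∨ w = x ∨ w = y ∨ w = t0 := by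
    intro w
    by_cases hw : w ∈ ({p, q, r, u, x, y} : Finset (Fin 7))
    · simp only [Finset.mem_insert, Finset.mem_singleton] at hw
      rcases hw with h | h | h | h | h | h <;> simp [h]
    · have : w ∈ Finset.univ \ ({p, q, r, u, x, y} : Finset (Fin 7)) :=
        Finset.mem_sdiff.mpr ⟨Finset.mem_univ w, hw⟩
      rw [ht0] at this
      right; right; right; right; right; right
      exact Finset.mem_singleton.mp this
  -- t0 is isolated
  have hiso : ∀ w, ¬ H.Adj t0 w := by
    intro w hadj
    rcases huniv w with h | h | h | h | h | h | h <;> rw [h] at hadj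
    · exact absurd (hclosed p t0 (by simp) hadj.symm) (by simp [htp, htq, htr])
    · exact absurd (hclosed q t0 (by simp) hadj.symm) (by simp [htp, htq, htr])
    · exact absurd (hclosed r t0 (by simp) hadj.symm) (by simp [htp, htq, htr])
    · exact absurd (hclosed2 u t0 (by simp) hadj.symm) (by simp [htu, htx, hty])
    · exact absurd (hclosed2 x t0 (by simp) hadj.symm) (by simp [htu, htx, hty])
    · exact absurd (hclosed2 y t0 (by simp) hadj.symm) (by simp [htu, htx, hty])
    · exact hadj.ne rfl
  have hdt0 : H.degree t0 = 0 := by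
    unfold SimpleGraph.degree
    refine Finset.card_eq_zero.mpr (Finset.eq_empty_iff_forall_notMem.mpr ?_)
    intro w hw
    exact hiso w ((mem_neighborFinset _ _ _).mp hw)
  have hc4 : ({u, x, y, t0} : Finset (Fin 7)).card = 4 := by
    rw [Finset.card_insert_of_notMem (by simp [hux.ne, huy.ne, Ne.symm htu]),
      Finset.card_insert_of_notMem (by simp [hxy, Ne.symm htx]),
      Finset.card_insert_of_notMem (by simp [Ne.symm hty]), Finset.card_singleton]
  have hsub4 : ({u, x, y, t0} : Finset (Fin 7)) ⊆ Finset.univ \ {p, q, r} := by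
    intro w hw
    simp only [Finset.mem_insert, Finset.mem_singleton] at hw
    rcases hw with rfl | rfl | rfl | rfl <;>
      simp [hup, huq, hur, hxp, hxq, hxr, hyp, hyq, hyr, htp, htq, htr]
  have hReq : Finset.univ \ ({p, q, r} : Finset (Fin 7)) = {u, x, y, t0} :=
    (Finset.eq_of_subset_of_card_le hsub4 (by rw [hRcard, hc4])).symm
  have hsum4 : ∑ v ∈ ({u, x, y, t0} : Finset (Fin 7)), H.degree v
      = H.degree u + H.degree x + H.degree y := by
    rw [Finset.sum_insert (by simp [hux.ne, huy.ne, Ne.symm htu]),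
      Finset.sum_insert (by simp [hxy, Ne.symm htx]),
      Finset.sum_insert (by simp [Ne.symm hty]), Finset.sum_singleton, hdt0]
    omega
  have hRs : ∑ v ∈ (Finset.univ \ ({p, q, r} : Finset (Fin 7))), H.degree v
      = H.degree u + H.degree x + H.degree y := by rw [hReq, hsum4]
  have h2u := deg_le_two hgf u
  have h2x := deg_le_two hgf x
  have h2y := deg_le_two hgf y
  have hfx : Full H x := full_of_two_le_deg (by omega)
  have hxya : H.Adj x y := tri_of_full_full hgf hux huy hxy hfx
  have hnc6 : H.edgeSet.ncard = 6 := by omega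
  have hE : H.edgeSet = {s(p,q), s(p,r), s(q,r), s(u,x), s(u,y), s(x,y)} := by
    ext e
    constructor
    · intro he
      revert he
      refine Sym2.ind (fun w1 w2 => ?_) e
      intro he
      rw [mem_edgeSet] at he
      rcases huniv w1 with h | h | h | h | h | h | h <;> rw [h] at he ⊢
      · have hw2 := hclosed p w2 (by simp) he
        simp only [Set.mem_insert_iff, Set.mem_singleton_iff] at hw2
        rcases hw2 with h2 | h2 | h2 <;> rw [h2] at he ⊢
        · exact (he.ne rfl).elim
        · simp
        · simp
      · have hw2 := hclosed q w2 (by simp) he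
        simp only [Set.mem_insert_iff, Set.mem_singleton_iff] at hw2
        rcases hw2 with h2 | h2 | h2 <;> rw [h2] at he ⊢
        · rw [Sym2.eq_swap]; simp
        · exact (he.ne rfl).elim
        · simp
      · have hw2 := hclosed r w2 (by simp) he
        simp only [Set.mem_insert_iff, Set.mem_singleton_iff] at hw2
        rcases hw2 with h2 | h2 | h2 <;> rw [h2] at he ⊢
        · rw [Sym2.eq_swap]; simp
        · rw [Sym2.eq_swap]; simp
        · exact (he.ne rfl).elim
      · have hw2 := hclosed2 u w2 (by simp) he
        simp only [Set.mem_insert_iff, Set.mem_singleton_iff] at hw2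
        rcases hw2 with h2 | h2 | h2 <;> rw [h2] at he ⊢
        · exact (he.ne rfl).elim
        · simp
        · simp
      · have hw2 := hclosed2 x w2 (by simp) he
        simp only [Set.mem_insert_iff, Set.mem_singleton_iff] at hw2
        rcases hw2 with h2 | h2 | h2 <;> rw [h2] at he ⊢
        · rw [Sym2.eq_swap]; simp
        · exact (he.ne rfl).elim
        · simp
      · have hw2 := hclosed2 y w2 (by simp) he
        simp only [Set.mem_insert_iff, Set.mem_singleton_iff] at hw2
        rcases hw2 with h2 | h2 | h2 <;> rw [h2] at he ⊢
        · rw [Sym2.eq_swap]; simp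
        · rw [Sym2.eq_swap]; simp
        · exact (he.ne rfl).elim
      · exact ((hiso w2 he).elim)
    · intro he
      simp only [Set.mem_insert_iff, Set.mem_singleton_iff] at he
      rcases he with rfl | rfl | rfl | rfl | rfl | rfl <;> rw [mem_edgeSet] <;>
        first | exact hpq | exact hpr | exact hqr | exact hux | exact huy | exact hxya
  exact ⟨p, q, r, u, x, y,
    ⟨hpq.ne, hpr.ne, Ne.symm hup, Ne.symm hxp, Ne.symm hyp, hqr.ne, Ne.symm huq,
     Ne.symm hxq, Ne.symm hyq, Ne.symm hur, Ne.symm hxr, Ne.symm hyr, hux.ne, huy.ne, hxy⟩,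
    hpq, hpr, hqr, hux, huy, hxya, hE, hnc6⟩

end structure6

section sorting
open Sym2

lemma sort3 {p q r : Fin 7} (hpq : p ≠ q) (hpr : p ≠ r) (hqr : q ≠ r) :
    ∃ a b c : Fin 7, a < b ∧ b < c ∧
      a ∈ ({p,q,r} : Set (Fin 7)) ∧ b ∈ ({p,q,r} : Set (Fin 7)) ∧ c ∈ ({p,q,r} : Set (Fin 7)) ∧
      ({s(a,b), s(a,c), s(b,c)} : Set (Sym2 (Fin 7))) = {s(p,q), s(p,r), s(q,r)} := by
  rcases lt_trichotomy p q with h1 | h1 | h1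
  · rcases lt_trichotomy q r with h2 | h2 | h2
    · exact ⟨p, q, r, h1, h2, by simp, by simp, by simp, rfl⟩
    · exact absurd h2 hqr
    · rcases lt_trichotomy p r with h3 | h3 | h3
      · refine ⟨p, r, q, h3, h2, by simp, by simp, by simp, ?_⟩
        rw [show s(r,q) = s(q,r) from Sym2.eq_swap]
        ext z; simp; tauto
      · exact absurd h3 hpr
      · refine ⟨r, p, q, h3, h1, by simp, by simp, by simp, ?_⟩
        rw [show s(r,p) = s(p,r) from Sym2.eq_swap, show s(r,q) = s(q,r) from Sym2.eq_swap]
        ext z; simp; tauto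
  · exact absurd h1 hpq
  · rcases lt_trichotomy p r with h3 | h3 | h3
    · refine ⟨q, p, r, h1, h3, by simp, by simp, by simp, ?_⟩
      rw [show s(q,p) = s(p,q) from Sym2.eq_swap]
      ext z; simp; tauto
    · exact absurd h3 hpr
    · rcases lt_trichotomy q r with h2 | h2 | h2
      · refine ⟨q, r, p, h2, h3, by simp, by simp, by simp, ?_⟩
        rw [show s(q,p) = s(p,q) from Sym2.eq_swap, show s(r,p) = s(p,r) from Sym2.eq_swap]
        ext z; simp; tauto
      · exact absurd h2 hqr
      · refine ⟨r, q, p, h2, h1, by simp, by simp, by simp, ?_⟩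
        rw [show s(r,q) = s(q,r) from Sym2.eq_swap, show s(r,p) = s(p,r) from Sym2.eq_swap,
          show s(q,p) = s(p,q) from Sym2.eq_swap]
        ext z; simp; tauto

lemma union6 (x1 x2 x3 x4 x5 x6 : Sym2 (Fin 7)) :
    ({x1,x2,x3,x4,x5,x6} : Set (Sym2 (Fin 7))) = {x1,x2,x3} ∪ {x4,x5,x6} := by
  ext z; simp; tauto

end sorting

section sorted
variable {H : SimpleGraph (Fin 7)} (hgf : IsGenTriangleFactor H) [DecidableRel H.Adj]

include hgf in
lemma structure_sorted (h6 : 6 ≤ H.edgeSet.ncard) :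
    ∃ a b c d e f : Fin 7, a < b ∧ b < c ∧ d < e ∧ e < f ∧ a < d ∧
      (b ≠ d ∧ b ≠ e ∧ b ≠ f ∧ c ≠ d ∧ c ≠ e ∧ c ≠ f) ∧
      H.edgeSet = {s(a,b), s(a,c), s(b,c), s(d,e), s(d,f), s(e,f)} := by
  obtain ⟨p, q, r, u, x, y, hne, hpq, hpr, hqr, hux, huy, hxy, hE, _hn6⟩ :=
    structure_raw hgf h6
  obtain ⟨npq, npr, npu, npx, npy, nqr, nqu, nqx, nqy, nru, nrx, nry, nux, nuy, nxy⟩ := hne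
  obtain ⟨a, b, c, hab, hbc, ham, hbm, hcm, he1⟩ := sort3 npq npr nqr
  obtain ⟨d, e, f, hde, hef, hdm, hem, hfm, he2⟩ := sort3 nux nuy nxy
  have hcross : ∀ z w, z ∈ ({p,q,r} : Set (Fin 7)) → w ∈ ({u,x,y} : Set (Fin 7)) → z ≠ w := by
    intro z w hz hw
    rcases hz with rfl | rfl | rfl <;> rcases hw with rfl | rfl | rfl <;> assumption
  have hset : ({s(a,b), s(a,c), s(b,c), s(d,e), s(d,f), s(e,f)} : Set (Sym2 (Fin 7)))
      = {s(p,q), s(p,r), s(q,r), s(u,x), s(u,y), s(x,y)} := by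
    rw [union6, he1, he2, ← union6]
  have had : a ≠ d := hcross a d ham hdm
  rcases lt_or_gt_of_ne had with h | h
  · exact ⟨a, b, c, d, e, f, hab, hbc, hde, hef, h,
      ⟨hcross b d hbm hdm, hcross b e hbm hem, hcross b f hbm hfm,
       hcross c d hcm hdm, hcross c e hcm hem, hcross c f hcm hfm⟩,
      by rw [hE]; exact hset.symm⟩
  · refine ⟨d, e, f, a, b, c, hde, hef, hab, hbc, h,
      ⟨(hcross a e ham hem).symm, (hcross b e hbm hem).symm, (hcross c e hcm hem).symm,
       (hcross a f ham hfm).symm, (hcross b f hbm hfm).symm, (hcross c f hcm hfm).symm⟩, ?_⟩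
    · rw [hE]
      rw [union6, Set.union_comm, ← union6] at hset
      exact hset.symm

end sorted
abbrev N6 := ℕ×ℕ×ℕ×ℕ×ℕ×ℕ

def DJ (s t : N6) : Bool :=
  decide ((7*s.1+s.2.1) ≠ (7*t.1+t.2.1)) && (decide ((7*s.1+s.2.1) ≠ (7*t.1+t.2.2.1)) && (decide ((7*s.1+s.2.1) ≠ (7*t.2.1+t.2.2.1)) && (decide ((7*s.1+s.2.1) ≠ (7*t.2.2.2.1+t.2.2.2.2.1)) && (decide ((7*s.1+s.2.1) ≠ (7*t.2.2.2.1+t.2.2.2.2.2)) && (decide ((7*s.1+s.2.1) ≠ (7*t.2.2.2.2.1+t.2.2.2.2.2)) && (decide ((7*s.1+s.2.2.1) ≠ (7*t.1+t.2.1)) && (decide ((7*s.1+s.2.2.1) ≠ (7*t.1+t.2.2.1)) && (decide ((7*s.1+s.2.2.1) ≠ (7*t.2.1+t.2.2.1)) && (decide ((7*s.1+s.2.2.1) ≠ (7*t.2.2.2.1+t.2.2.2.2.1)) && (decide ((7*s.1+s.2.2.1) ≠ (7*t.2.2.2.1+t.2.2.2.2.2)) && (decide ((7*s.1+s.2.2.1)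 ≠ (7*t.2.2.2.2.1+t.2.2.2.2.2)) && (decide ((7*s.2.1+s.2.2.1) ≠ (7*t.1+t.2.1)) && (decide ((7*s.2.1+s.2.2.1) ≠ (7*t.1+t.2.2.1)) && (decide ((7*s.2.1+s.2.2.1) ≠ (7*t.2.1+t.2.2.1)) && (decide ((7*s.2.1+s.2.2.1) ≠ (7*t.2.2.2.1+t.2.2.2.2.1)) && (decide ((7*s.2.1+s.2.2.1) ≠ (7*t.2.2.2.1+t.2.2.2.2.2)) && (decide ((7*s.2.1+s.2.2.1) ≠ (7*t.2.2.2.2.1+t.2.2.2.2.2)) && (decide ((7*s.2.2.2.1+s.2.2.2.2.1) ≠ (7*t.1+t.2.1)) && (decide ((7*s.2.2.2.1+s.2.2.2.2.1) ≠ (7*t.1+t.2.2.1)) && (decide ((7*s.2.2.2.1+s.2.2.2.2.1) ≠ (7*t.2.1+t.2.2.1)) && (decide ((7*s.2.2.2.1+s.2.2.2.2.1) ≠ (7*t.2.2.2.1+t.2.2.2.2.1)) && (decide ((7*s.2.2.2.1+s.2.2.2.2.1) ≠ (7*t.2.2.2.1+t.2.2.2.2.2)) && (decide ((7*s.2.2.2.1+s.2.2.2.2.1)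 ≠ (7*t.2.2.2.2.1+t.2.2.2.2.2)) && (decide ((7*s.2.2.2.1+s.2.2.2.2.2) ≠ (7*t.1+t.2.1)) && (decide ((7*s.2.2.2.1+s.2.2.2.2.2) ≠ (7*t.1+t.2.2.1)) && (decide ((7*s.2.2.2.1+s.2.2.2.2.2) ≠ (7*t.2.1+t.2.2.1)) && (decide ((7*s.2.2.2.1+s.2.2.2.2.2) ≠ (7*t.2.2.2.1+t.2.2.2.2.1)) && (decide ((7*s.2.2.2.1+s.2.2.2.2.2) ≠ (7*t.2.2.2.1+t.2.2.2.2.2)) && (decide ((7*s.2.2.2.1+s.2.2.2.2.2) ≠ (7*t.2.2.2.2.1+t.2.2.2.2.2)) && (decide ((7*s.2.2.2.2.1+s.2.2.2.2.2) ≠ (7*t.1+t.2.1)) && (decide ((7*s.2.2.2.2.1+s.2.2.2.2.2) ≠ (7*t.1+t.2.2.1)) && (decide ((7*s.2.2.2.2.1+s.2.2.2.2.2) ≠ (7*t.2.1+t.2.2.1)) && (decide ((7*s.2.2.2.2.1+s.2.2.2.2.2) ≠ (7*t.2.2.2.1+t.2.2.2.2.1)) && (decide ((7*s.2.2.2.2.1+s.2.2.2.2.2)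 ≠ (7*t.2.2.2.1+t.2.2.2.2.2)) && (decide ((7*s.2.2.2.2.1+s.2.2.2.2.2) ≠ (7*t.2.2.2.2.1+t.2.2.2.2.2)))))))))))))))))))))))))))))))))))))

lemma DJ_of_disjoint (a b c d e f a2 b2 c2 d2 e2 f2 : Fin 7)
    (hab : a < b) (hac : a < c) (hbc : b < c) (hde : d < e) (hdf : d < f) (hef : e < f)
    (ha2b2 : a2 < b2) (ha2c2 : a2 < c2) (hb2c2 : b2 < c2) (hd2e2 : d2 < e2) (hd2f2 : d2 < f2) (he2f2 : e2 < f2)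
    (hd : Disjoint ({s(a,b), s(a,c), s(b,c), s(d,e), s(d,f), s(e,f)} : Set (Sym2 (Fin 7))) ({s(a2,b2), s(a2,c2), s(b2,c2), s(d2,e2), s(d2,f2), s(e2,f2)} : Set (Sym2 (Fin 7)))) :
    DJ (a.val, b.val, c.val, d.val, e.val, f.val) (a2.val, b2.val, c2.val, d2.val, e2.val, f2.val) = true := by
  have key : ∀ (x y u v : Fin 7), x < y → u < v →
      s(x,y) ∈ ({s(a,b), s(a,c), s(b,c), s(d,e), s(d,f), s(e,f)} : Set (Sym2 (Fin 7))) → s(u,v) ∈ ({s(a2,b2), s(a2,c2), s(b2,c2), s(d2,e2), s(d2,f2), s(e2,f2)} : Set (Sym2 (Fin 7))) →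
      7*x.val+y.val ≠ 7*u.val+v.val := by
    intro x y u v hxy huv hm1 hm2 heq
    have hy7 := y.isLt
    have hv7 := v.isLt
    have hxu : x = u := Fin.val_injective (by omega)
    have hyv : y = v := Fin.val_injective (by omega)
    subst hxu; subst hyv
    exact Set.disjoint_left.mp hd hm1 hm2
  simp only [DJ, Bool.and_eq_true, decide_eq_true_eq]
  exact ⟨(key a b a2 b2 hab ha2b2 (by simp) (by simp)),
    (key a b a2 c2 hab ha2c2 (by simp) (by simp)),
    (key a b b2 c2 hab hb2c2 (by simp) (by simp)),
    (key a b d2 e2 hab hd2e2 (by simp) (by simp)),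
    (key a b d2 f2 hab hd2f2 (by simp) (by simp)),
    (key a b e2 f2 hab he2f2 (by simp) (by simp)),
    (key a c a2 b2 hac ha2b2 (by simp) (by simp)),
    (key a c a2 c2 hac ha2c2 (by simp) (by simp)),
    (key a c b2 c2 hac hb2c2 (by simp) (by simp)),
    (key a c d2 e2 hac hd2e2 (by simp) (by simp)),
    (key a c d2 f2 hac hd2f2 (by simp) (by simp)),
    (key a c e2 f2 hac he2f2 (by simp) (by simp)),
    (key b c a2 b2 hbc ha2b2 (by simp) (by simp)),
    (key b c a2 c2 hbc ha2c2 (by simp) (by simp)),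
    (key b c b2 c2 hbc hb2c2 (by simp) (by simp)),
    (key b c d2 e2 hbc hd2e2 (by simp) (by simp)),
    (key b c d2 f2 hbc hd2f2 (by simp) (by simp)),
    (key b c e2 f2 hbc he2f2 (by simp) (by simp)),
    (key d e a2 b2 hde ha2b2 (by simp) (by simp)),
    (key d e a2 c2 hde ha2c2 (by simp) (by simp)),
    (key d e b2 c2 hde hb2c2 (by simp) (by simp)),
    (key d e d2 e2 hde hd2e2 (by simp) (by simp)),
    (key d e d2 f2 hde hd2f2 (by simp) (by simp)),
    (key d e e2 f2 hde he2f2 (by simp) (by simp)),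
    (key d f a2 b2 hdf ha2b2 (by simp) (by simp)),
    (key d f a2 c2 hdf ha2c2 (by simp) (by simp)),
    (key d f b2 c2 hdf hb2c2 (by simp) (by simp)),
    (key d f d2 e2 hdf hd2e2 (by simp) (by simp)),
    (key d f d2 f2 hdf hd2f2 (by simp) (by simp)),
    (key d f e2 f2 hdf he2f2 (by simp) (by simp)),
    (key e f a2 b2 hef ha2b2 (by simp) (by simp)),
    (key e f a2 c2 hef ha2c2 (by simp) (by simp)),
    (key e f b2 c2 hef hb2c2 (by simp) (by simp)),
    (key e f d2 e2 hef hd2e2 (by simp) (by simp)),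
    (key e f d2 f2 hef hd2f2 (by simp) (by simp)),
    (key e f e2 f2 hef he2f2 (by simp) (by simp))⟩
def L3 : List (ℕ×ℕ×ℕ) := [(0,1,2), (0,1,3), (0,1,4), (0,1,5), (0,1,6), (0,2,3), (0,2,4), (0,2,5), (0,2,6), (0,3,4), (0,3,5), (0,3,6), (0,4,5), (0,4,6), (0,5,6), (1,2,3), (1,2,4), (1,2,5), (1,2,6), (1,3,4), (1,3,5), (1,3,6), (1,4,5), (1,4,6), (1,5,6), (2,3,4), (2,3,5), (2,3,6), (2,4,5), (2,4,6), (2,5,6), (3,4,5), (3,4,6), (3,5,6), (4,5,6)]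
def L : List (ℕ×ℕ×ℕ×ℕ×ℕ×ℕ) := [(0,1,2,3,4,5), (0,1,2,3,4,6), (0,1,2,3,5,6), (0,1,2,4,5,6), (0,1,3,2,4,5), (0,1,3,2,4,6), (0,1,3,2,5,6), (0,1,3,4,5,6), (0,1,4,2,3,5), (0,1,4,2,3,6), (0,1,4,2,5,6), (0,1,4,3,5,6), (0,1,5,2,3,4), (0,1,5,2,3,6), (0,1,5,2,4,6), (0,1,5,3,4,6), (0,1,6,2,3,4), (0,1,6,2,3,5), (0,1,6,2,4,5), (0,1,6,3,4,5), (0,2,3,1,4,5), (0,2,3,1,4,6), (0,2,3,1,5,6), (0,2,3,4,5,6), (0,2,4,1,3,5), (0,2,4,1,3,6), (0,2,4,1,5,6), (0,2,4,3,5,6), (0,2,5,1,3,4), (0,2,5,1,3,6), (0,2,5,1,4,6), (0,2,5,3,4,6), (0,2,6,1,3,4), (0,2,6,1,3,5), (0,2,6,1,4,5), (0,2,6,3,4,5), (0,3,4,1,2,5), (0,3,4,1,2,6), (0,3,4,1,5,6), (0,3,4,2,5,6), (0,3,5,1,2,4), (0,3,5,1,2,6), (0,3,5,1,4,6), (0,3,5,2,4,6),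 (0,3,6,1,2,4), (0,3,6,1,2,5), (0,3,6,1,4,5), (0,3,6,2,4,5), (0,4,5,1,2,3), (0,4,5,1,2,6), (0,4,5,1,3,6), (0,4,5,2,3,6), (0,4,6,1,2,3), (0,4,6,1,2,5), (0,4,6,1,3,5), (0,4,6,2,3,5), (0,5,6,1,2,3), (0,5,6,1,2,4), (0,5,6,1,3,4), (0,5,6,2,3,4), (1,2,3,4,5,6), (1,2,4,3,5,6), (1,2,5,3,4,6), (1,2,6,3,4,5), (1,3,4,2,5,6), (1,3,5,2,4,6), (1,3,6,2,4,5), (1,4,5,2,3,6), (1,4,6,2,3,5), (1,5,6,2,3,4)]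
set_option maxRecDepth 10000 in
theorem Mem3 : ∀ a b c : Fin 7, a < b → b < c → (a.val, b.val, c.val) ∈ L3 := by decide

set_option maxRecDepth 10000 in
theorem L_char : ∀ p ∈ L3, ∀ q ∈ L3, (p.1 < q.1 ∧
    p.2.1 ≠ q.1 ∧ p.2.1 ≠ q.2.1 ∧ p.2.1 ≠ q.2.2 ∧
    p.2.2 ≠ q.1 ∧ p.2.2 ≠ q.2.1 ∧ p.2.2 ≠ q.2.2) →
    (p.1, p.2.1, p.2.2, q.1, q.2.1, q.2.2) ∈ L := by decide

set_option maxRecDepth 10000 in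
theorem Kb : (L.all (fun s => L.all (fun t => !(DJ s t) || L.all (fun u =>
    !(DJ s u) || !(DJ t u))))) = true := by decide

lemma K' (s t u : N6) (hs : s ∈ L) (ht : t ∈ L) (hu : u ∈ L)
    (h1 : DJ s t = true) (h2 : DJ s u = true) (h3 : DJ t u = true) : False := by
  have h := Kb
  simp only [List.all_eq_true, Bool.or_eq_true, Bool.not_eq_true'] at h
  rcases h s hs t ht with h4 | h4
  · rw [h1] at h4; cases h4
  · rcases h4 u hu with h5 | h5
    · rw [h2] at h5; cases h5
    · rw [h3] at h5; cases h5
lemma edge_le6 {H : SimpleGraph (Fin 7)} (hgf : IsGenTriangleFactor H) :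
    H.edgeSet.ncard ≤ 6 := by
  classical
  by_contra h
  push_neg at h
  obtain ⟨_, _, _, _, _, _, _, _, _, _, _, _, _, _, hn6⟩ := structure_raw hgf (by omega)
  omega

/-- The union of any three generalized triangle factors on `7` vertices has at
most `17` edges; in particular one cannot cover `18` of the edges of `K₇` by
three generalized triangle factors. -/
theorem stmt11 (H₁ H₂ H₃ : SimpleGraph (Fin 7))
    (h₁ : IsGenTriangleFactor H₁) (h₂ : IsGenTriangleFactor H₂)
    (h₃ : IsGenTriangleFactor H₃) :
    (H₁ ⊔ H₂ ⊔ H₃).edgeSet.ncard ≤ 17 := by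
  classical
  by_contra hc
  push_neg at hc
  have hE : (H₁ ⊔ H₂ ⊔ H₃).edgeSet = H₁.edgeSet ∪ H₂.edgeSet ∪ H₃.edgeSet := by
    rw [edgeSet_sup, edgeSet_sup]
  rw [hE] at hc
  have hA6 := edge_le6 h₁
  have hB6 := edge_le6 h₂
  have hC6 := edge_le6 h₃
  have u2 : (H₁.edgeSet ∪ H₂.edgeSet).ncard + (H₁.edgeSet ∩ H₂.edgeSet).ncard
      = H₁.edgeSet.ncard + H₂.edgeSet.ncard :=
    Set.ncard_union_add_ncard_inter _ _ (Set.toFinite _) (Set.toFinite _)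
  have u1 : (H₁.edgeSet ∪ H₂.edgeSet ∪ H₃.edgeSet).ncard
      + ((H₁.edgeSet ∪ H₂.edgeSet) ∩ H₃.edgeSet).ncard
      = (H₁.edgeSet ∪ H₂.edgeSet).ncard + H₃.edgeSet.ncard :=
    Set.ncard_union_add_ncard_inter _ _ (Set.toFinite _) (Set.toFinite _)
  have hiAB : (H₁.edgeSet ∩ H₂.edgeSet).ncard = 0 := by omega
  have hiABC : ((H₁.edgeSet ∪ H₂.edgeSet) ∩ H₃.edgeSet).ncard = 0 := by omega
  have dAB : Disjoint H₁.edgeSet H₂.edgeSet :=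
    Set.disjoint_iff_inter_eq_empty.mpr ((Set.ncard_eq_zero (Set.toFinite _)).mp hiAB)
  have dABC : Disjoint (H₁.edgeSet ∪ H₂.edgeSet) H₃.edgeSet :=
    Set.disjoint_iff_inter_eq_empty.mpr ((Set.ncard_eq_zero (Set.toFinite _)).mp hiABC)
  have dAC : Disjoint H₁.edgeSet H₃.edgeSet := (Set.disjoint_union_left.mp dABC).1
  have dBC : Disjoint H₂.edgeSet H₃.edgeSet := (Set.disjoint_union_left.mp dABC).2
  obtain ⟨a1, b1, c1, d1, e1, f1, s11, s12, s13, s14, s15,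
    ⟨n11, n12, n13, n14, n15, n16⟩, hE1⟩ := structure_sorted h₁ (by omega)
  obtain ⟨a2, b2, c2, d2, e2, f2, s21, s22, s23, s24, s25,
    ⟨n21, n22, n23, n24, n25, n26⟩, hE2⟩ := structure_sorted h₂ (by omega)
  obtain ⟨a3, b3, c3, d3, e3, f3, s31, s32, s33, s34, s35,
    ⟨n31, n32, n33, n34, n35, n36⟩, hE3⟩ := structure_sorted h₃ (by omega)
  rw [hE1, hE2] at dAB
  rw [hE1, hE3] at dAC
  rw [hE2, hE3] at dBC
  have dj12 := DJ_of_disjoint a1 b1 c1 d1 e1 f1 a2 b2 c2 d2 e2 f2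
    s11 (s11.trans s12) s12 s13 (s13.trans s14) s14
    s21 (s21.trans s22) s22 s23 (s23.trans s24) s24 dAB
  have dj13 := DJ_of_disjoint a1 b1 c1 d1 e1 f1 a3 b3 c3 d3 e3 f3
    s11 (s11.trans s12) s12 s13 (s13.trans s14) s14
    s31 (s31.trans s32) s32 s33 (s33.trans s34) s34 dAC
  have dj23 := DJ_of_disjoint a2 b2 c2 d2 e2 f2 a3 b3 c3 d3 e3 f3
    s21 (s21.trans s22) s22 s23 (s23.trans s24) s24
    s31 (s31.trans s32) s32 s33 (s33.trans s34) s34 dBC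
  have m1 : (a1.val, b1.val, c1.val, d1.val, e1.val, f1.val) ∈ L :=
    L_char _ (Mem3 a1 b1 c1 s11 s12) _ (Mem3 d1 e1 f1 s13 s14)
      ⟨s15, fun h => n11 (Fin.val_injective h), fun h => n12 (Fin.val_injective h),
       fun h => n13 (Fin.val_injective h), fun h => n14 (Fin.val_injective h),
       fun h => n15 (Fin.val_injective h), fun h => n16 (Fin.val_injective h)⟩
  have m2 : (a2.val, b2.val, c2.val, d2.val, e2.val, f2.val) ∈ L :=
    L_char _ (Mem3 a2 b2 c2 s21 s22) _ (Mem3 d2 e2 f2 s23 s24)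
      ⟨s25, fun h => n21 (Fin.val_injective h), fun h => n22 (Fin.val_injective h),
       fun h => n23 (Fin.val_injective h), fun h => n24 (Fin.val_injective h),
       fun h => n25 (Fin.val_injective h), fun h => n26 (Fin.val_injective h)⟩
  have m3 : (a3.val, b3.val, c3.val, d3.val, e3.val, f3.val) ∈ L :=
    L_char _ (Mem3 a3 b3 c3 s31 s32) _ (Mem3 d3 e3 f3 s33 s34)
      ⟨s35, fun h => n31 (Fin.val_injective h), fun h => n32 (Fin.val_injective h),
       fun h => n33 (Fin.val_injective h), fun h => n34 (Fin.val_injective h),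
       fun h => n35 (Fin.val_injective h), fun h => n36 (Fin.val_injective h)⟩
  exact K' _ _ _ m1 m2 m3 dj12 dj13 dj23
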